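/- Exchange step in the greedy optimality proof: let c* be a feasible revenue-maximizing allocation and c the greedy allocation, agreeing on coordinates 1,...,i−1 with c_i > c*_i. Let c*_max = max{c*_{i+1},...,c*_n} and J = {j > i : c*_j = c*_max}. Then every subset S ⊆ {1,...,n} with i ∈ S whose constraint Σ_{ℓ∈S} c*_ℓ ≤ D_1+...+D_{|S|} is tight must contain all of J, provided c*_max > 0 and the nonzero D_j are distinct. -/

import Mathlib

open Finset

/-- Exchange step in the greedy-optimality proof: if the feasible allocations `c`
(greedy) and `c*` agree on coordinates below `i` with `c i > c* i`, `cmax` is the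
maximum of `c*` over indices above `i` with `cmax > 0`, and the nonzero capacities
are distinct, then every tight subset constraint containing `i` contains every
index `j > i` attaining `cmax`. -/
theorem stmt9 {n : ℕ} (D : ℕ → ℝ)
    (hDanti : Antitone D) (hDnonneg : ∀ j, 0 ≤ D j)
    (hDdistinct : ∀ j k : ℕ, j < k → D k ≠ 0 → D k < D j)
    (c cstar : Fin n → ℝ)
    (hcnonneg : ∀ i, 0 ≤ c i) (hcstarnonneg : ∀ i, 0 ≤ cstar i)
    (hcfeas : ∀ S : Finset (Fin n), ∑ ℓ ∈ S, c ℓ ≤ ∑ j ∈ Finset.range S.card, D j)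
    (hcstarfeas : ∀ S : Finset (Fin n), ∑ ℓ ∈ S, cstar ℓ ≤ ∑ j ∈ Finset.range S.card, D j)
    (i : Fin n) (hagree : ∀ j : Fin n, j < i → c j = cstar j) (hgt : cstar i < c i)
    (cmax : ℝ) (hcmaxub : ∀ j : Fin n, i < j → cstar j ≤ cmax)
    (hcmaxmem : ∃ j : Fin n, i < j ∧ cstar j = cmax) (hcmaxpos : 0 < cmax) :
    ∀ S : Finset (Fin n), i ∈ S →
      (∑ ℓ ∈ S, cstar ℓ = ∑ j ∈ Finset.range S.card, D j) →
      ∀ j : Fin n, i < j → cstar j = cmax → j ∈ S := by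
  intro S hiS htight j hij hjc
  by_contra hjS
  -- Step 1: adding j to S shows cmax ≤ D S.card
  have h1 := hcstarfeas (insert j S)
  rw [Finset.sum_insert hjS, Finset.card_insert_of_notMem hjS,
      Finset.sum_range_succ, htight, hjc] at h1
  have hcmaxD : cmax ≤ D S.card := by linarith
  have hDgt : ∀ k, k < S.card → cmax ≤ D k := by
    intro k hk
    have := hDdistinct k S.card hk (by linarith)
    linarith
  -- Split S into A (≤ i) and B (> i)
  set A := S.filter (fun ℓ => ℓ ≤ i) with hAdef
  set B := S.filter (fun ℓ => ¬ ℓ ≤ i) with hBdef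
  have hsplit : ∑ ℓ ∈ A, cstar ℓ + ∑ ℓ ∈ B, cstar ℓ = ∑ ℓ ∈ S, cstar ℓ :=
    Finset.sum_filter_add_sum_filter_not S _ _
  have hcard : A.card + B.card = S.card :=
    Finset.card_filter_add_card_filter_not _
  have hiA : i ∈ A := Finset.mem_filter.2 ⟨hiS, le_refl i⟩
  -- sum of c over A exceeds sum of cstar over A by c i - cstar i
  have hAsum : ∑ ℓ ∈ A, c ℓ = ∑ ℓ ∈ A, cstar ℓ + (c i - cstar i) := by
    rw [← Finset.add_sum_erase A c hiA, ← Finset.add_sum_erase A cstar hiA]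
    have : ∑ ℓ ∈ A.erase i, c ℓ = ∑ ℓ ∈ A.erase i, cstar ℓ := by
      apply Finset.sum_congr rfl
      intro ℓ hℓ
      have h1 := Finset.mem_erase.1 hℓ
      have h2 := (Finset.mem_filter.1 h1.2).2
      exact hagree ℓ (lt_of_le_of_ne h2 h1.1)
    rw [this]; ring
  have hAfeas := hcfeas A
  have hAslack : ∑ ℓ ∈ A, cstar ℓ < ∑ k ∈ Finset.range A.card, D k := by
    rw [hAsum] at hAfeas; linarith
  -- sum over B bounded by B.card * cmax
  have hBsum : ∑ ℓ ∈ B, cstar ℓ ≤ (B.card : ℝ) * cmax := by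
    calc ∑ ℓ ∈ B, cstar ℓ ≤ ∑ ℓ ∈ B, cmax := by
          apply Finset.sum_le_sum
          intro ℓ hℓ
          have h2 := (Finset.mem_filter.1 hℓ).2
          exact hcmaxub ℓ (lt_of_not_ge h2)
      _ = (B.card : ℝ) * cmax := by rw [Finset.sum_const, nsmul_eq_mul]
  -- split the range sum
  have hAle : A.card ≤ S.card := by omega
  have hrange : ∑ k ∈ Finset.range S.card, D k
      = ∑ k ∈ Finset.range A.card, D k + ∑ k ∈ Finset.Ico A.card S.card, D k := by
    rw [Finset.range_eq_Ico, Finset.range_eq_Ico]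
    exact (Finset.sum_Ico_consecutive D (Nat.zero_le _) hAle).symm
  have hIco : (B.card : ℝ) * cmax ≤ ∑ k ∈ Finset.Ico A.card S.card, D k := by
    have : ∑ k ∈ Finset.Ico A.card S.card, cmax ≤ ∑ k ∈ Finset.Ico A.card S.card, D k := by
      apply Finset.sum_le_sum
      intro k hk
      exact hDgt k (Finset.mem_Ico.1 hk).2
    rw [Finset.sum_const, Nat.card_Ico, nsmul_eq_mul] at this
    have hb : S.card - A.card = B.card := by omega
    rw [hb] at this
    exact this
  linarith [hsplit, htight]
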